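/- Let M be the bi-infinite matrix indexed by ℤ×ℤ with M(i,j) = f_Z(i - j; λ₁, λ₂) (Skellam mass function), and let G be the matrix with G(i,j) = e^{2(λ₁+λ₂)} (-1)^{i-j} f_Z(i - j; λ₁, λ₂). Then for all r, c ∈ ℤ, the (absolutely convergent) sum over j of M(r,j) G(j,c) equals 1 if r = c and 0 otherwise; i.e., G is a two-sided inverse of M as an operator on bounded sequences. -/

import Mathlib

/-! Auxiliary discrete convolution machinery on `ℤ`. -/

noncomputable def skConv (a b : ℤ → ℝ) (n : ℤ) : ℝ := ∑' j, a (n - j) * b j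

private lemma shear_summable {a b : ℤ → ℝ} (ha : Summable fun n => |a n|)
    (hb : Summable fun n => |b n|) :
    Summable fun p : ℤ × ℤ => |a (p.1 - p.2) * b p.2| := by
  have h : Summable fun p : ℤ × ℤ => ‖a p.1 * b p.2‖ := by
    refine Summable.mul_norm ?_ ?_ <;> simpa [Real.norm_eq_abs] using ‹_›
  have hinj : Function.Injective (fun p : ℤ × ℤ => ((p.1 - p.2, p.2) : ℤ × ℤ)) := by
    intro p q hpq
    simp only [Prod.mk.injEq] at hpq
    obtain ⟨h1, h2⟩ := hpq
    ext <;> omega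
  refine (h.comp_injective hinj).congr fun p => ?_
  simp [Real.norm_eq_abs, Function.comp, abs_mul]

private lemma skConv_abs_summable {a b : ℤ → ℝ} (ha : Summable fun n => |a n|)
    (hb : Summable fun n => |b n|) :
    Summable fun n => |skConv a b n| := by
  have h := shear_summable ha hb
  have hmarg : Summable fun n : ℤ => ∑' j, |a (n - j) * b j| := h.prod
  refine hmarg.of_nonneg_of_le (fun n => abs_nonneg _) (fun n => ?_)
  have hfib : Summable fun j => ‖a (n - j) * b j‖ :=
    (h.prod_factor n).congr fun j => (Real.norm_eq_abs _).symm
  have hle := norm_tsum_le_tsum_norm hfib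
  simp only [Real.norm_eq_abs] at hle
  exact hle

private lemma skConv_comm (a b : ℤ → ℝ) : skConv a b = skConv b a := by
  funext n
  calc skConv a b n = ∑' j, a (n - (n - j)) * b (n - j) :=
        ((Equiv.subLeft n).tsum_eq (fun j => a (n - j) * b j)).symm
    _ = ∑' j, b (n - j) * a j := by
        refine tsum_congr fun j => ?_
        rw [sub_sub_cancel, mul_comm]
    _ = skConv b a n := rfl

private lemma skConv_assoc {a b c : ℤ → ℝ} (ha : Summable fun n => |a n|)
    (hb : Summable fun n => |b n|) (hc : Summable fun n => |c n|) :
    skConv (skConv a b) c = skConv a (skConv b c) := by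
  funext n
  have habs : Summable fun p : ℤ × ℤ => |a (n - p.1)| * |b (p.1 - p.2) * c p.2| := by
    refine Summable.of_nonneg_of_le (fun p => by positivity) (fun p => ?_)
      (((shear_summable hb hc).mul_left (∑' m, |a m|)))
    exact mul_le_mul_of_nonneg_right (Summable.le_tsum ha _ fun j _ => abs_nonneg _) (abs_nonneg _)
  have key : Summable (Function.uncurry fun i j => a (n - i) * (b (i - j) * c j)) := by
    rw [← summable_abs_iff]
    simpa [Function.uncurry, abs_mul, mul_assoc] using habs
  calc skConv (skConv a b) c n
      = ∑' (j : ℤ), (∑' (i : ℤ), a (n - j - i) * b i) * c j := rfl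
    _ = ∑' (j : ℤ) (i : ℤ), (a (n - j - i) * b i) * c j := by
        refine tsum_congr fun j => ?_
        rw [tsum_mul_right]
    _ = ∑' (j : ℤ) (i : ℤ), a (n - i) * (b (i - j) * c j) := by
        refine tsum_congr fun j => ?_
        rw [← (Equiv.subRight j).tsum_eq (fun i => (a (n - j - i) * b i) * c j)]
        refine tsum_congr fun i => ?_
        simp only [Equiv.subRight_apply]
        rw [show n - j - (i - j) = n - i from by ring, mul_assoc]
    _ = ∑' (i : ℤ) (j : ℤ), a (n - i) * (b (i - j) * c j) :=
        Summable.tsum_comm key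
    _ = ∑' (i : ℤ), a (n - i) * ∑' (j : ℤ), b (i - j) * c j := by
        refine tsum_congr fun i => ?_
        rw [tsum_mul_left]
    _ = skConv a (skConv b c) n := rfl

private lemma skConv_exchange {A B C D : ℤ → ℝ} (hA : Summable fun n => |A n|)
    (hB : Summable fun n => |B n|) (hC : Summable fun n => |C n|)
    (hD : Summable fun n => |D n|) :
    skConv (skConv A B) (skConv C D) = skConv (skConv A C) (skConv B D) := by
  have hCD := skConv_abs_summable hC hD
  have hBD := skConv_abs_summable hB hD
  rw [skConv_assoc hA hB hCD, ← skConv_assoc hB hC hD, skConv_comm B C,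
    skConv_assoc hC hB hD, ← skConv_assoc hA hC hBD]

private lemma skConv_neg (a b : ℤ → ℝ) (n : ℤ) :
    skConv (fun m => a (-m)) (fun m => b (-m)) n = skConv a b (-n) := by
  have h := (Equiv.neg ℤ).tsum_eq (fun j => a (-(n - j)) * b (-j))
  rw [skConv, skConv, ← h]
  refine tsum_congr fun j => ?_
  rw [Equiv.neg_apply, neg_neg, show -(n - -j) = -n - j from by ring]

private lemma skConv_delta (x y : ℝ) :
    skConv (fun n => if n = 0 then x else 0) (fun n => if n = 0 then y else 0) =
      fun n => if n = 0 then x * y else 0 := by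
  funext n
  rw [skConv, tsum_eq_single 0 (fun j hj => by simp [hj])]
  simp only [sub_zero, if_true]
  split_ifs <;> simp

noncomputable def pSeq (lam : ℝ) (m : ℤ) : ℝ :=
  if 0 ≤ m then Real.exp (-lam) * lam ^ m.toNat / Nat.factorial m.toNat else 0

private lemma pSeq_natCast (lam : ℝ) (m : ℕ) :
    pSeq lam m = Real.exp (-lam) * lam ^ m / Nat.factorial m := by
  simp [pSeq]

private lemma pSeq_abs_summable (lam : ℝ) : Summable fun m => |pSeq lam m| := by
  apply Summable.of_nat_of_neg
  · have h : Summable fun n : ℕ => Real.exp (-lam) * (|lam| ^ n / n.factorial) :=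
      (Real.summable_pow_div_factorial |lam|).mul_left _
    refine h.of_nonneg_of_le (fun n => abs_nonneg _) (fun n => ?_)
    rw [pSeq_natCast, abs_div, abs_mul, abs_pow, Nat.abs_cast,
      abs_of_pos (Real.exp_pos _), mul_div_assoc]
  · apply summable_of_ne_finset_zero (s := {0})
    intro n hn
    simp only [Finset.mem_singleton] at hn
    rw [pSeq, if_neg (by omega), abs_zero]

private lemma skConv_pq (lam : ℝ) :
    skConv (pSeq lam) (fun m => (-1 : ℝ) ^ m * pSeq lam m) =
      fun n => if n = 0 then Real.exp (-(2 * lam)) else 0 := by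
  funext n
  rcases lt_or_ge n 0 with hn | hn
  · rw [if_neg (by omega), skConv]
    convert tsum_zero with j
    rcases le_or_gt 0 j with hj | hj
    · rw [show pSeq lam (n - j) = 0 from by rw [pSeq, if_neg (by omega)], zero_mul]
    · rw [show pSeq lam j = 0 from by rw [pSeq, if_neg (by omega)], mul_zero, mul_zero]
  · obtain ⟨N, rfl⟩ := Int.eq_ofNat_of_zero_le hn
    rw [skConv]
    rw [tsum_eq_sum (s := (Finset.range (N + 1)).map
        ⟨(Nat.cast : ℕ → ℤ), Nat.cast_injective⟩) ?_]
    · rw [Finset.sum_map]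
      simp only [Function.Embedding.coeFn_mk]
      have hterm : ∀ k ∈ Finset.range (N + 1),
          pSeq lam ((N : ℤ) - k) * ((-1 : ℝ) ^ (k : ℤ) * pSeq lam k) =
            Real.exp (-(2 * lam)) / N.factorial *
              ((-lam) ^ k * lam ^ (N - k) * (N.choose k : ℝ)) := by
        intro k hk
        rw [Finset.mem_range] at hk
        have hk' : k ≤ N := by omega
        rw [show ((N : ℤ) - k) = ((N - k : ℕ) : ℤ) from by
          push_cast [Nat.cast_sub hk']; ring]
        rw [pSeq_natCast, pSeq_natCast, zpow_natCast]
        have hfac : ((N.choose k : ℝ)) * (k.factorial : ℝ) * ((N - k).factorial : ℝ)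
            = (N.factorial : ℝ) := by
          exact_mod_cast Nat.choose_mul_factorial_mul_factorial hk'
        have hexp : Real.exp (-lam) * Real.exp (-lam) = Real.exp (-(2 * lam)) := by
          rw [← Real.exp_add]; ring_nf
        have h1 : ((k.factorial : ℝ)) ≠ 0 := Nat.cast_ne_zero.mpr k.factorial_ne_zero
        have h2 : (((N - k).factorial : ℝ)) ≠ 0 := Nat.cast_ne_zero.mpr (N - k).factorial_ne_zero
        have h3 : ((N.factorial : ℝ)) ≠ 0 := Nat.cast_ne_zero.mpr N.factorial_ne_zero
        have h4 : ((N.choose k : ℝ)) ≠ 0 :=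
          Nat.cast_ne_zero.mpr (Nat.choose_pos hk').ne'
        rw [neg_pow, ← hfac, ← hexp]
        field_simp
        ring
      rw [Finset.sum_congr rfl hterm, ← Finset.mul_sum, ← add_pow (-lam) lam N]
      rw [neg_add_cancel]
      rcases Nat.eq_zero_or_pos N with h | h
      · subst h; simp
      · rw [zero_pow (by omega), mul_zero, if_neg (by exact_mod_cast h.ne')]
    · intro j hj
      simp only [Finset.mem_map, Finset.mem_range, Function.Embedding.coeFn_mk,
        not_exists, not_and] at hj
      rcases le_or_gt 0 j with hj0 | hj0
      · obtain ⟨k, rfl⟩ := Int.eq_ofNat_of_zero_le hj0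
        have : ¬ k < N + 1 := fun h => hj k h rfl
        rw [show pSeq lam ((N : ℤ) - k) = 0 from by rw [pSeq, if_neg (by omega)], zero_mul]
      · rw [show pSeq lam j = 0 from by rw [pSeq, if_neg (by omega)], mul_zero, mul_zero]

private lemma neg_one_zpow_neg (m : ℤ) : ((-1 : ℝ)) ^ (-m) = (-1 : ℝ) ^ m := by
  rw [zpow_neg, ← inv_zpow, inv_neg, inv_one]

/-- The bi-infinite Skellam matrix `M(i,j) = f_Z(i-j)` has two-sided inverse
`G(i,j) = e^{2(λ₁+λ₂)} (-1)^{i-j} f_Z(i-j)`. -/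
theorem stmt_8 (lam1 lam2 : ℝ) (h1 : 0 < lam1) (h2 : 0 < lam2)
    (fX fY fZ : ℤ → ℝ) (M G : ℤ → ℤ → ℝ)
    (hfX : ∀ m : ℤ, fX m =
      if 0 ≤ m then Real.exp (-lam1) * lam1 ^ m.toNat / Nat.factorial m.toNat else 0)
    (hfY : ∀ m : ℤ, fY m =
      if m ≤ 0 then Real.exp (-lam2) * lam2 ^ (-m).toNat / Nat.factorial (-m).toNat else 0)
    (hfZ : ∀ k : ℤ, fZ k = ∑' j : ℤ, fX (k - j) * fY j)
    (hM : ∀ i j : ℤ, M i j = fZ (i - j))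
    (hG : ∀ i j : ℤ, G i j =
      Real.exp (2 * (lam1 + lam2)) * ((-1 : ℝ) ^ (i - j) * fZ (i - j))) :
    ∀ r c : ℤ, ∑' j : ℤ, M r j * G j c = if r = c then 1 else 0 := by
  intro r c
  have hfx : fX = pSeq lam1 := funext fun m => by rw [hfX, pSeq]
  have hfy : fY = fun m => pSeq lam2 (-m) := by
    funext m
    rw [hfY, pSeq]
    simp only [neg_nonneg]
  have hA : Summable fun m => |fX m| := by rw [hfx]; exact pSeq_abs_summable lam1
  have hB : Summable fun m => |fY m| := by
    rw [hfy]
    exact (pSeq_abs_summable lam2).comp_injective neg_injective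
  have habs_sign : ∀ (f : ℤ → ℝ) (m : ℤ), |(-1 : ℝ) ^ m * f m| = |f m| := by
    intro f m
    rw [abs_mul]
    rcases Int.even_or_odd m with hm | hm
    · rw [hm.neg_one_zpow, abs_one, one_mul]
    · rw [hm.neg_one_zpow, abs_neg, abs_one, one_mul]
  have hC : Summable fun m => |(-1 : ℝ) ^ m * fX m| :=
    hA.congr fun m => (habs_sign fX m).symm
  have hD : Summable fun m => |(-1 : ℝ) ^ m * fY m| :=
    hB.congr fun m => (habs_sign fY m).symm
  have hfz : fZ = skConv fX fY := funext fun k => by rw [hfZ k]; rfl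
  -- the signed Skellam sequence is the convolution of the signed components
  have hg : (fun k => (-1 : ℝ) ^ k * fZ k) =
      skConv (fun m => (-1 : ℝ) ^ m * fX m) (fun m => (-1 : ℝ) ^ m * fY m) := by
    funext k
    rw [hfZ k, ← tsum_mul_left, skConv]
    refine tsum_congr fun j => ?_
    calc (-1 : ℝ) ^ k * (fX (k - j) * fY j)
        = ((-1 : ℝ) ^ (k - j) * (-1 : ℝ) ^ j) * (fX (k - j) * fY j) := by
          rw [← zpow_add₀ (by norm_num : (-1 : ℝ) ≠ 0)]
          rw [show k - j + j = k from by ring]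
      _ = ((-1 : ℝ) ^ (k - j) * fX (k - j)) * ((-1 : ℝ) ^ j * fY j) := by ring
  -- compute the X-part and Y-part convolutions
  have hXdelta : skConv fX (fun m => (-1 : ℝ) ^ m * fX m) =
      fun n => if n = 0 then Real.exp (-(2 * lam1)) else 0 := by
    rw [hfx]; exact skConv_pq lam1
  have hYdelta : skConv fY (fun m => (-1 : ℝ) ^ m * fY m) =
      fun n => if n = 0 then Real.exp (-(2 * lam2)) else 0 := by
    funext n
    have e2 : (fun m => (-1 : ℝ) ^ m * fY m)
        = fun m => ((fun x => (-1 : ℝ) ^ x * pSeq lam2 x) (-m)) := by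
      funext m
      simp only [hfy]
      rw [neg_one_zpow_neg]
    calc skConv fY (fun m => (-1 : ℝ) ^ m * fY m) n
        = skConv (fun m => pSeq lam2 (-m))
            (fun m => ((fun x => (-1 : ℝ) ^ x * pSeq lam2 x) (-m))) n := by
          rw [e2, hfy]
      _ = skConv (pSeq lam2) (fun x => (-1 : ℝ) ^ x * pSeq lam2 x) (-n) :=
          skConv_neg (pSeq lam2) (fun x => (-1 : ℝ) ^ x * pSeq lam2 x) n
      _ = if -n = 0 then Real.exp (-(2 * lam2)) else 0 := by rw [skConv_pq lam2]
      _ = if n = 0 then Real.exp (-(2 * lam2)) else 0 := by simp [neg_eq_zero]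
  -- main computation
  calc ∑' j, M r j * G j c
      = ∑' j, Real.exp (2 * (lam1 + lam2)) *
          (fZ (r - j) * ((-1 : ℝ) ^ (j - c) * fZ (j - c))) := by
        refine tsum_congr fun j => ?_
        rw [hM, hG]; ring
    _ = Real.exp (2 * (lam1 + lam2)) *
          ∑' j, fZ (r - j) * ((-1 : ℝ) ^ (j - c) * fZ (j - c)) := tsum_mul_left
    _ = Real.exp (2 * (lam1 + lam2)) *
          skConv fZ (fun k => (-1 : ℝ) ^ k * fZ k) (r - c) := by
        congr 1
        rw [skConv,
          ← (Equiv.addRight c).tsum_eq (fun j => fZ (r - j) * ((-1 : ℝ) ^ (j - c) * fZ (j - c)))]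
        refine tsum_congr fun j => ?_
        simp only [Equiv.coe_addRight]
        rw [show j + c - c = j from by ring, show r - (j + c) = r - c - j from by ring]
    _ = Real.exp (2 * (lam1 + lam2)) *
          skConv (skConv fX (fun m => (-1 : ℝ) ^ m * fX m))
            (skConv fY (fun m => (-1 : ℝ) ^ m * fY m)) (r - c) := by
        rw [hg, hfz, skConv_exchange hA hB hC hD]
    _ = Real.exp (2 * (lam1 + lam2)) *
          (if r - c = 0 then Real.exp (-(2 * lam1)) * Real.exp (-(2 * lam2)) else 0) := by
        rw [hXdelta, hYdelta, skConv_delta]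
    _ = if r = c then 1 else 0 := by
        rcases eq_or_ne r c with h | h
        · rw [if_pos h, if_pos (by omega)]
          rw [← Real.exp_add, ← Real.exp_add, ← Real.exp_zero]
          ring_nf
        · rw [if_neg h, if_neg (by omega), mul_zero]
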